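/- arXiv:1508.05712 — 2 statements merged into one kernel-verified Lean document; each statement's English description precedes it below -/
import Mathlib

section
/- For 3 ≤ r ≤ 8, the group of ℤ-linear automorphisms of Λ_r that preserve the bilinear form and fix K_r acts transitively on the set of exceptional classes of Λ_r. -/
/-- The intersection pairing on the Picard lattice `Λ_r = ℤ^(r+1)`:
`⟨x, y⟩ = x₀y₀ − x₁y₁ − ⋯ − x_r y_r`. -/
def pair {r : ℕ} (x y : Fin (r + 1) → ℤ) : ℤ :=
  x 0 * y 0 - ∑ i : Fin r, x i.succ * y i.succ

/-- The canonical class `K_r = (−3, 1, …, 1)`. -/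
def Kc (r : ℕ) : Fin (r + 1) → ℤ := fun i => if i = 0 then -3 else 1

/-- Exceptional classes (classes of `(−1)`-curves). -/
def Exceptional {r : ℕ} (E : Fin (r + 1) → ℤ) : Prop :=
  pair E E = -1 ∧ pair (Kc r) E = -1

/-- Nef classes: nonnegative pairing with every exceptional class. -/
def Nef {r : ℕ} (D : Fin (r + 1) → ℤ) : Prop :=
  ∀ E : Fin (r + 1) → ℤ, Exceptional E → 0 ≤ pair D E

/-- Conics: nef classes `Q` with `⟨Q,Q⟩ = 0` and `⟨K,Q⟩ = −2`. -/
def Conic {r : ℕ} (Q : Fin (r + 1) → ℤ) : Prop :=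
  Nef Q ∧ pair Q Q = 0 ∧ pair (Kc r) Q = -2

/-- Twisted cubics: nef classes `C` with `⟨C,C⟩ = 1` and `⟨K,C⟩ = −3`. -/
def TwistedCubic {r : ℕ} (C : Fin (r + 1) → ℤ) : Prop :=
  Nef C ∧ pair C C = 1 ∧ pair (Kc r) C = -3

section aux
variable {r : ℕ}

lemma pair_add_left (x z y : Fin (r+1) → ℤ) : pair (x + z) y = pair x y + pair z y := by
  simp [pair, add_mul, Finset.sum_add_distrib]; ring

lemma pair_smul_left (c : ℤ) (x y : Fin (r+1) → ℤ) : pair (c • x) y = c * pair x y := by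
  simp only [pair, Pi.smul_apply, smul_eq_mul, Finset.mul_sum]; ring_nf
  rw [Finset.mul_sum]; congr 1; exact Finset.sum_congr rfl fun i _ => by ring

lemma pair_comm (x y : Fin (r+1) → ℤ) : pair x y = pair y x := by
  simp [pair, mul_comm]

lemma pair_add_right (x y z : Fin (r+1) → ℤ) : pair x (y + z) = pair x y + pair x z := by
  rw [pair_comm, pair_add_left, pair_comm y x, pair_comm z x]

lemma pair_smul_right (c : ℤ) (x y : Fin (r+1) → ℤ) : pair x (c • y) = c * pair x y := by
  rw [pair_comm, pair_smul_left, pair_comm]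

def reflL (α : Fin (r+1) → ℤ) : (Fin (r+1) → ℤ) →ₗ[ℤ] (Fin (r+1) → ℤ) where
  toFun x := x + pair x α • α
  map_add' x y := by rw [pair_add_left, add_smul]; abel
  map_smul' c x := by simp only [RingHom.id_apply]; rw [pair_smul_left, mul_smul]; simp only [smul_add]

lemma reflL_apply (α x : Fin (r+1) → ℤ) : reflL α x = x + pair x α • α := rfl

lemma reflL_invol (α : Fin (r+1) → ℤ) (hα : pair α α = -2) (x : Fin (r+1) → ℤ) :
    reflL α (reflL α x) = x := by
  simp only [reflL_apply, pair_add_left, pair_smul_left, hα]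
  module

def reflE (α : Fin (r+1) → ℤ) (hα : pair α α = -2) :
    (Fin (r+1) → ℤ) ≃ₗ[ℤ] (Fin (r+1) → ℤ) :=
  LinearEquiv.ofLinear (reflL α) (reflL α)
    (LinearMap.ext fun x => reflL_invol α hα x)
    (LinearMap.ext fun x => reflL_invol α hα x)

lemma reflE_apply (α : Fin (r+1) → ℤ) (hα : pair α α = -2) (x : Fin (r+1) → ℤ) :
    reflE α hα x = x + pair x α • α := rfl

lemma reflE_pair (α : Fin (r+1) → ℤ) (hα : pair α α = -2) (x y : Fin (r+1) → ℤ) :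
    pair (reflE α hα x) (reflE α hα y) = pair x y := by
  simp only [reflE_apply, pair_add_left, pair_add_right, pair_smul_left, pair_smul_right, hα]
  rw [pair_comm α y]
  ring

lemma reflE_K (α : Fin (r+1) → ℤ) (hα : pair α α = -2) (hK : pair (Kc r) α = 0) :
    reflE α hα (Kc r) = Kc r := by
  simp [reflE_apply, hK]

end aux

section arith
variable {r : ℕ}

lemma pair_self (E : Fin (r+1) → ℤ) : pair E E = E 0 ^ 2 - ∑ i : Fin r, E i.succ ^ 2 := by
  simp [pair, sq]

lemma pair_Kc (E : Fin (r+1) → ℤ) :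
    pair (Kc r) E = -3 * E 0 - ∑ i : Fin r, E i.succ := by
  simp [pair, Kc, Fin.succ_ne_zero]

lemma exc_sq (E : Fin (r+1) → ℤ) (hE : Exceptional E) :
    ∑ i : Fin r, E i.succ ^ 2 = E 0 ^ 2 + 1 := by
  have := hE.1; rw [pair_self] at this; linarith

lemma exc_sum (E : Fin (r+1) → ℤ) (hE : Exceptional E) :
    ∑ i : Fin r, E i.succ = 1 - 3 * E 0 := by
  have := hE.2; rw [pair_Kc] at this; linarith

lemma exc_a_nonneg (h8 : r ≤ 8) (E : Fin (r+1) → ℤ) (hE : Exceptional E) : 0 ≤ E 0 := by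
  have hsq := exc_sq E hE
  have hsum := exc_sum E hE
  have hcs : (∑ i : Fin r, E i.succ) ^ 2 ≤
      (Finset.univ.card : ℤ) * ∑ i : Fin r, E i.succ ^ 2 :=
    sq_sum_le_card_mul_sum_sq
  rw [Finset.card_univ, Fintype.card_fin] at hcs
  have hr : (r : ℤ) ≤ 8 := by exact_mod_cast h8
  have hle : ∑ i : Fin r, E i.succ ≤ ∑ i : Fin r, E i.succ ^ 2 :=
    Finset.sum_le_sum fun i _ => by nlinarith [sq_nonneg (E i.succ), sq_nonneg (E i.succ - 1)]
  have hpos : (0:ℤ) ≤ E 0 ^ 2 + 1 := by positivity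
  nlinarith [sq_nonneg (E 0 + 1), sq_nonneg (E 0)]

end arith

section pos
variable {r : ℕ}

lemma exc_b_nonpos (h8 : r ≤ 8) (E : Fin (r+1) → ℤ) (hE : Exceptional E)
    (ha : 1 ≤ E 0) (j : Fin r) : E j.succ ≤ 0 := by
  by_contra h
  push_neg at h
  have hbj : 1 ≤ E j.succ := h
  have h1 : ∑ i ∈ Finset.univ.erase j, E i.succ = (1 - 3 * E 0) - E j.succ := by
    have := Finset.sum_erase_add Finset.univ (fun i : Fin r => E i.succ) (Finset.mem_univ j)
    rw [exc_sum E hE] at this; linarith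
  have h2 : ∑ i ∈ Finset.univ.erase j, E i.succ ^ 2 = (E 0 ^ 2 + 1) - E j.succ ^ 2 := by
    have := Finset.sum_erase_add Finset.univ (fun i : Fin r => E i.succ ^ 2) (Finset.mem_univ j)
    rw [exc_sq E hE] at this; linarith
  have hcs : (∑ i ∈ Finset.univ.erase j, E i.succ) ^ 2 ≤
      ((Finset.univ.erase j).card : ℤ) * ∑ i ∈ Finset.univ.erase j, E i.succ ^ 2 :=
    sq_sum_le_card_mul_sum_sq
  have hcard : ((Finset.univ.erase j).card : ℤ) ≤ 7 := by
    rw [Finset.card_erase_of_mem (Finset.mem_univ j), Finset.card_univ, Fintype.card_fin]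
    omega
  have hsq2 : (0:ℤ) ≤ ∑ i ∈ Finset.univ.erase j, E i.succ ^ 2 :=
    Finset.sum_nonneg fun i _ => sq_nonneg _
  rw [h1, h2] at hcs
  nlinarith [sq_nonneg (E 0), sq_nonneg (E j.succ - 1), sq_nonneg (E 0 - 1), mul_pos (lt_of_lt_of_le one_pos ha) (lt_of_lt_of_le one_pos ha)]

end pos

section triple
variable {r : ℕ}

set_option maxHeartbeats 1000000 in
lemma exc_triple (h3 : 3 ≤ r) (h8 : r ≤ 8) (E : Fin (r+1) → ℤ) (hE : Exceptional E)
    (ha : 1 ≤ E 0) :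
    ∃ i j k : Fin r, j ≠ i ∧ k ≠ i ∧ k ≠ j ∧
      E i.succ + E j.succ + E k.succ ≤ -(E 0) - 1 := by
  have hbn : ∀ j : Fin r, E j.succ ≤ 0 := exc_b_nonpos h8 E hE ha
  have hcardu : (Finset.univ : Finset (Fin r)).card = r := by
    rw [Finset.card_univ, Fintype.card_fin]
  obtain ⟨i₁, hi₁, hm1⟩ := Finset.exists_min_image (Finset.univ : Finset (Fin r))
    (fun i => E i.succ) ⟨⟨0, by omega⟩, Finset.mem_univ _⟩
  have hne2 : (Finset.univ.erase i₁).Nonempty := by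
    rw [← Finset.card_pos, Finset.card_erase_of_mem hi₁, hcardu]; omega
  obtain ⟨i₂, hi₂, hm2⟩ := Finset.exists_min_image _ (fun i => E i.succ) hne2
  have hne3 : ((Finset.univ.erase i₁).erase i₂).Nonempty := by
    rw [← Finset.card_pos, Finset.card_erase_of_mem hi₂,
      Finset.card_erase_of_mem hi₁, hcardu]; omega
  obtain ⟨i₃, hi₃, hm3⟩ := Finset.exists_min_image _ (fun i => E i.succ) hne3
  refine ⟨i₁, i₂, i₃, (Finset.mem_erase.mp hi₂).1, ?_, ?_, ?_⟩
  · exact (Finset.mem_erase.mp (Finset.mem_of_mem_erase hi₃)).1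
  · exact (Finset.mem_erase.mp hi₃).1
  set a := E 0 with hadef
  set x := E i₁.succ with hxdef
  set y := E i₂.succ with hydef
  set z := E i₃.succ with hzdef
  set rest := ((Finset.univ.erase i₁).erase i₂).erase i₃ with hrest
  have hxy : x ≤ y := hm1 i₂ (Finset.mem_univ _)
  have hyz : y ≤ z := hm2 i₃ (Finset.mem_of_mem_erase hi₃)
  have hz0 : z ≤ 0 := hbn i₃
  -- sums split
  have hs1 : ∑ l ∈ rest, E l.succ + z = ∑ l ∈ (Finset.univ.erase i₁).erase i₂, E l.succ :=
    Finset.sum_erase_add _ _ hi₃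
  have hs2 : ∑ l ∈ (Finset.univ.erase i₁).erase i₂, E l.succ + y
      = ∑ l ∈ Finset.univ.erase i₁, E l.succ := Finset.sum_erase_add _ _ hi₂
  have hs3 : ∑ l ∈ Finset.univ.erase i₁, E l.succ + x = ∑ l : Fin r, E l.succ :=
    Finset.sum_erase_add _ _ hi₁
  have hq1 : ∑ l ∈ rest, E l.succ ^ 2 + z ^ 2
      = ∑ l ∈ (Finset.univ.erase i₁).erase i₂, E l.succ ^ 2 :=
    Finset.sum_erase_add _ (fun l => E l.succ ^ 2) hi₃
  have hq2 : ∑ l ∈ (Finset.univ.erase i₁).erase i₂, E l.succ ^ 2 + y ^ 2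
      = ∑ l ∈ Finset.univ.erase i₁, E l.succ ^ 2 :=
    Finset.sum_erase_add _ (fun l => E l.succ ^ 2) hi₂
  have hq3 : ∑ l ∈ Finset.univ.erase i₁, E l.succ ^ 2 + x ^ 2 = ∑ l : Fin r, E l.succ ^ 2 :=
    Finset.sum_erase_add _ (fun l => E l.succ ^ 2) hi₁
  set R1 := ∑ l ∈ rest, E l.succ with hR1
  set R2 := ∑ l ∈ rest, E l.succ ^ 2 with hR2
  have hsum : x + y + z + R1 = 1 - 3 * a := by
    have := exc_sum E hE; rw [hadef]; linarith [hs1, hs2, hs3, this]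
  have hsq : x ^ 2 + y ^ 2 + z ^ 2 + R2 = a ^ 2 + 1 := by
    have := exc_sq E hE; rw [hadef]; linarith [hq1, hq2, hq3, this]
  have hzrest : ∀ l ∈ rest, z ≤ E l.succ := fun l hl => hm3 l (Finset.mem_of_mem_erase hl)
  have hR2le : R2 ≤ z * R1 := by
    rw [hR2, hR1, Finset.mul_sum]
    refine Finset.sum_le_sum fun l hl => ?_
    have h1 := hzrest l hl
    have h2 := hbn l
    nlinarith
  set S := x + y + z with hSdef
  have hR1eq : R1 = 1 - 3 * a - S := by linarith [hsum]
  have hzR : z * R1 = z * (1 - 3 * a - S) := by rw [hR1eq]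
  by_contra hcon
  push_neg at hcon
  have hS : -a ≤ S := by
    have := Int.lt_iff_add_one_le.mp hcon
    omega
  have hxz : x ≤ z := le_trans hxy hyz
  have hxy2 : x ^ 2 + y ^ 2 + z ^ 2 ≤ S ^ 2 - 4 * S * z + 6 * z ^ 2 := by
    nlinarith [mul_nonneg (sub_nonneg.2 hxz) (sub_nonneg.2 hyz)]
  have hD : a ^ 2 + 1 ≤ S ^ 2 - 5 * S * z + 6 * z ^ 2 + z * (1 - 3 * a) := by
    nlinarith [hxy2, hR2le, hzR, hsq]
  have hB3 : -a ≤ 3 * z := by linarith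
  have hSa : 0 ≤ S + a := by linarith
  have hP1 : 0 ≤ a + 5 * z - S := by linarith
  have h2a : 0 ≤ 2 * a + 6 * z + 1 := by linarith
  nlinarith [mul_nonneg hSa hP1, mul_nonneg (neg_nonneg.2 hz0) h2a, hD]

end triple

section zero
variable {r : ℕ}

def ee (r : ℕ) (k : Fin (r+1)) : Fin (r+1) → ℤ := fun m => if m = k then 1 else 0

lemma sum_single (x : Fin (r+1) → ℤ) (p : Fin r) (c : ℤ) :
    ∑ t : Fin r, x t.succ * (if t = p then c else 0) = x p.succ * c := by
  simp [mul_ite, Finset.sum_ite_eq']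

lemma exc_zero_basis (E : Fin (r+1) → ℤ) (hE : Exceptional E) (h0 : E 0 = 0) :
    ∃ j : Fin r, ∀ t : Fin r, E t.succ = if t = j then 1 else 0 := by
  have hsq := exc_sq E hE
  have hsum := exc_sum E hE
  rw [h0] at hsq hsum
  norm_num at hsq hsum
  have hdiff : ∑ t : Fin r, (E t.succ ^ 2 - E t.succ) = 0 := by
    rw [Finset.sum_sub_distrib, hsq, hsum]; ring
  have hterm : ∀ t ∈ (Finset.univ : Finset (Fin r)), E t.succ ^ 2 - E t.succ = 0 := by
    rw [← Finset.sum_eq_zero_iff_of_nonneg]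
    · exact hdiff
    · intro t _
      nlinarith [sq_nonneg (E t.succ), sq_nonneg (E t.succ - 1)]
  have h01 : ∀ t : Fin r, E t.succ = 0 ∨ E t.succ = 1 := by
    intro t
    have := hterm t (Finset.mem_univ t)
    have h2 : E t.succ * (E t.succ - 1) = 0 := by ring_nf; ring_nf at this; linarith
    rcases mul_eq_zero.mp h2 with h | h
    · exact Or.inl h
    · exact Or.inr (by linarith)
  have hex : ∃ j : Fin r, E j.succ ≠ 0 := by
    by_contra hall
    push_neg at hall
    rw [Finset.sum_eq_zero (fun t _ => hall t)] at hsum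
    exact one_ne_zero hsum.symm
  obtain ⟨j, hj⟩ := hex
  have hj1 : E j.succ = 1 := (h01 j).resolve_left hj
  refine ⟨j, fun t => ?_⟩
  by_cases ht : t = j
  · simp [ht, hj1]
  · simp only [if_neg ht]
    rcases h01 t with h | h
    · exact h
    · exfalso
      have hsub : ({t, j} : Finset (Fin r)) ⊆ Finset.univ := Finset.subset_univ _
      have hpair : ∑ l ∈ ({t, j} : Finset (Fin r)), E l.succ = 2 := by
        rw [Finset.sum_pair ht, h, hj1]; norm_num
      have hle : ∑ l ∈ ({t, j} : Finset (Fin r)), E l.succ ≤ ∑ l : Fin r, E l.succ := by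
        refine Finset.sum_le_sum_of_subset_of_nonneg hsub fun l _ _ => ?_
        rcases h01 l with h' | h' <;> omega
      omega

lemma exc_zero_case (hr : 0 < r) (E : Fin (r+1) → ℤ) (hE : Exceptional E) (h0 : E 0 = 0) :
    ∃ g : (Fin (r+1) → ℤ) ≃ₗ[ℤ] (Fin (r+1) → ℤ),
      (∀ x y, pair (g x) (g y) = pair x y) ∧ g (Kc r) = Kc r ∧
      g E = ee r (Fin.succ ⟨0, hr⟩) := by
  obtain ⟨j, hj⟩ := exc_zero_basis E hE h0
  set i0 : Fin r := ⟨0, hr⟩ with hi0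
  by_cases hji : j = i0
  · refine ⟨LinearEquiv.refl ℤ _, fun x y => rfl, rfl, ?_⟩
    simp only [LinearEquiv.refl_apply]
    funext m
    induction m using Fin.cases with
    | zero => simp [ee, h0, (Fin.succ_ne_zero i0).symm]
    | succ t => simp [ee, hj t, hji, Fin.succ_inj]
  · set α : Fin (r+1) → ℤ :=
      fun m => (if m = j.succ then 1 else 0) - (if m = i0.succ then 1 else 0) with hαdef
    have hα0 : α 0 = 0 := by
      simp [hαdef, (Fin.succ_ne_zero j).symm, (Fin.succ_ne_zero i0).symm]
    have hαt : ∀ t : Fin r, α t.succ = (if t = j then 1 else 0) - (if t = i0 then 1 else 0) := by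
      intro t; simp [hαdef, Fin.succ_inj]
    have hpairα : ∀ x : Fin (r+1) → ℤ, pair x α = x i0.succ - x j.succ := by
      intro x
      have : ∀ t : Fin r, x t.succ * α t.succ
          = x t.succ * (if t = j then 1 else 0) - x t.succ * (if t = i0 then 1 else 0) := by
        intro t; rw [hαt t]; ring
      rw [pair, hα0, Finset.sum_congr rfl fun t _ => this t, Finset.sum_sub_distrib,
        sum_single, sum_single]
      ring
    have hαα : pair α α = -2 := by
      rw [hpairα]
      have h1 : α i0.succ = -1 := by
        rw [hαt]
        simp [Ne.symm hji]
      have h2 : α j.succ = 1 := by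
        rw [hαt]
        simp [hji]
      rw [h1, h2]; ring
    have hKα : pair (Kc r) α = 0 := by
      rw [hpairα]; simp [Kc, Fin.succ_ne_zero]
    have hEα : pair E α = -1 := by
      rw [hpairα, hj i0, hj j]
      simp [Ne.symm hji]
    refine ⟨reflE α hαα, reflE_pair α hαα, reflE_K α hαα hKα, ?_⟩
    rw [reflE_apply, hEα]
    funext m
    simp only [Pi.add_apply, Pi.smul_apply, smul_eq_mul]
    induction m using Fin.cases with
    | zero => simp [ee, h0, hα0, (Fin.succ_ne_zero i0).symm]
    | succ t =>
      rw [hαt t, hj t]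
      simp only [ee, Fin.succ_inj]
      by_cases h1 : t = j <;> by_cases h2 : t = i0 <;>
        simp [h1, h2, hji] <;> first | ring | (exfalso; exact hji (h1 ▸ h2 ▸ rfl))

end zero

section main
variable {r : ℕ}

lemma exc_preserved (g : (Fin (r+1) → ℤ) ≃ₗ[ℤ] (Fin (r+1) → ℤ))
    (hp : ∀ x y, pair (g x) (g y) = pair x y) (hK : g (Kc r) = Kc r)
    (E : Fin (r+1) → ℤ) (hE : Exceptional E) : Exceptional (g E) := by
  constructor
  · rw [hp E E]; exact hE.1
  · rw [← hK, hp (Kc r) E]; exact hE.2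

lemma exc_to_std (h3 : 3 ≤ r) (h8 : r ≤ 8) :
    ∀ (n : ℕ) (E : Fin (r+1) → ℤ), (E 0).toNat ≤ n → Exceptional E →
    ∃ g : (Fin (r+1) → ℤ) ≃ₗ[ℤ] (Fin (r+1) → ℤ),
      (∀ x y, pair (g x) (g y) = pair x y) ∧ g (Kc r) = Kc r ∧
      g E = ee r (Fin.succ ⟨0, by omega⟩) := by
  intro n
  induction n with
  | zero =>
    intro E hn hE
    have h0 : E 0 = 0 := by
      have := exc_a_nonneg h8 E hE
      omega
    exact exc_zero_case (by omega) E hE h0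
  | succ n ih =>
    intro E hn hE
    have ha0 := exc_a_nonneg h8 E hE
    by_cases h0 : E 0 = 0
    · exact exc_zero_case (by omega) E hE h0
    · have ha1 : 1 ≤ E 0 := by omega
      obtain ⟨i, j, k, hji, hki, hkj, htr⟩ := exc_triple h3 h8 E hE ha1
      set α : Fin (r+1) → ℤ := fun m =>
        if m = 0 then 1 else
          if m = i.succ then -1 else if m = j.succ then -1 else if m = k.succ then -1 else 0
        with hαdef
      have hα0 : α 0 = 1 := by simp [hαdef]
      have hαt : ∀ t : Fin r, α t.succ =
          (if t = i then (-1:ℤ) else 0) + (if t = j then -1 else 0) +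
            (if t = k then -1 else 0) := by
        intro t
        simp only [hαdef, Fin.succ_ne_zero, if_false, Fin.succ_inj]
        by_cases h1 : t = i <;> by_cases h2 : t = j <;> by_cases h3 : t = k <;>
          first
            | (subst_vars; simp_all)
            | simp [h1, h2, h3]
      have hpairα : ∀ x : Fin (r+1) → ℤ,
          pair x α = x 0 + x i.succ + x j.succ + x k.succ := by
        intro x
        have hc : ∀ t : Fin r, x t.succ * α t.succ =
            x t.succ * (if t = i then (-1:ℤ) else 0) + x t.succ * (if t = j then -1 else 0) +
              x t.succ * (if t = k then -1 else 0) := by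
          intro t; rw [hαt t]; ring
        rw [pair, hα0, Finset.sum_congr rfl fun t _ => hc t]
        rw [Finset.sum_add_distrib, Finset.sum_add_distrib, sum_single, sum_single, sum_single]
        ring
      have hαα : pair α α = -2 := by
        rw [hpairα, hα0, hαt i, hαt j, hαt k]
        simp [hji, hki, hkj, Ne.symm hji, Ne.symm hki, Ne.symm hkj]
      have hKα : pair (Kc r) α = 0 := by
        rw [hpairα]
        simp [Kc, Fin.succ_ne_zero]
      have hEα : pair E α ≤ -1 := by
        rw [hpairα]; omega
      set E' := reflE α hαα E with hE'def
      have hE'exc : Exceptional E' :=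
        exc_preserved _ (reflE_pair α hαα) (reflE_K α hαα hKα) E hE
      have hE'0 : E' 0 = E 0 + pair E α := by
        rw [hE'def, reflE_apply]
        simp [hα0]
      have hE'nonneg := exc_a_nonneg h8 E' hE'exc
      have hlt : (E' 0).toNat ≤ n := by omega
      obtain ⟨g', hg'p, hg'K, hg'E⟩ := ih E' hlt hE'exc
      refine ⟨(reflE α hαα).trans g', ?_, ?_, ?_⟩
      · intro x y
        simp only [LinearEquiv.trans_apply]
        rw [hg'p, reflE_pair]
      · simp only [LinearEquiv.trans_apply]
        rw [reflE_K α hαα hKα, hg'K]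
      · simp only [LinearEquiv.trans_apply]
        exact hg'E

end main


/-- For `3 ≤ r ≤ 8`, the group of ℤ-linear automorphisms of `Λ_r` preserving
the pairing and fixing `K_r` acts transitively on the exceptional classes. -/
theorem weyl_transitive_on_exceptional (r : ℕ) (h3 : 3 ≤ r) (h8 : r ≤ 8)
    (E E' : Fin (r + 1) → ℤ) (hE : Exceptional E) (hE' : Exceptional E') :
    ∃ g : (Fin (r + 1) → ℤ) ≃ₗ[ℤ] (Fin (r + 1) → ℤ),
      (∀ x y, pair (g x) (g y) = pair x y) ∧ g (Kc r) = Kc r ∧ g E = E' := by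
  obtain ⟨g1, hp1, hK1, hE1⟩ := exc_to_std h3 h8 (E 0).toNat E le_rfl hE
  obtain ⟨g2, hp2, hK2, hE2⟩ := exc_to_std h3 h8 (E' 0).toNat E' le_rfl hE'
  refine ⟨g1.trans g2.symm, ?_, ?_, ?_⟩
  · intro x y
    simp only [LinearEquiv.trans_apply]
    calc pair (g2.symm (g1 x)) (g2.symm (g1 y))
        = pair (g2 (g2.symm (g1 x))) (g2 (g2.symm (g1 y))) := (hp2 _ _).symm
      _ = pair (g1 x) (g1 y) := by rw [g2.apply_symm_apply, g2.apply_symm_apply]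
      _ = pair x y := hp1 x y
  · simp only [LinearEquiv.trans_apply, hK1]
    exact g2.symm_apply_eq.mpr hK2.symm
  · simp only [LinearEquiv.trans_apply, hE1]
    exact g2.symm_apply_eq.mpr hE2.symm
end

section
/- The group of ℤ-linear automorphisms of Λ₅ that preserve the bilinear form and fix K₅ acts transitively on the set of conics of Λ₅, and also acts transitively on the set of twisted cubics of Λ₅. -/
open Matrix

def J6 : Matrix (Fin 6) (Fin 6) ℤ := Matrix.diagonal ![1,-1,-1,-1,-1,-1]

lemma pair_expand (x y : Fin (5+1) → ℤ) :
    pair x y = x 0 * y 0 - x 1 * y 1 - x 2 * y 2 - x 3 * y 3 - x 4 * y 4 - x 5 * y 5 := by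
  have h : ∑ i : Fin 5, x i.succ * y i.succ =
      x 1 * y 1 + x 2 * y 2 + x 3 * y 3 + x 4 * y 4 + x 5 * y 5 := by
    rw [Fin.sum_univ_five]; rfl
  rw [pair, h]; ring

lemma pair_eq_dot (x y : Fin (5+1) → ℤ) : pair x y = x ⬝ᵥ J6.mulVec y := by
  rw [pair_expand]
  have h5 : (![(1:ℤ),-1,-1,-1,-1,-1]) 5 = -1 := rfl
  simp [J6, Matrix.mulVec_diagonal, dotProduct, Fin.sum_univ_six, h5]
  ring

lemma pair_preserve (M : Matrix (Fin 6) (Fin 6) ℤ) (h : Mᵀ * J6 * M = J6)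
    (x y : Fin (5+1) → ℤ) : pair (M.mulVec x) (M.mulVec y) = pair x y := by
  calc pair (M.mulVec x) (M.mulVec y)
      = (M *ᵥ x) ⬝ᵥ J6 *ᵥ (M *ᵥ y) := pair_eq_dot _ _
    _ = ((M *ᵥ x) ᵥ* J6) ⬝ᵥ (M *ᵥ y) := dotProduct_mulVec _ _ _
    _ = (((M *ᵥ x) ᵥ* J6) ᵥ* M) ⬝ᵥ y := dotProduct_mulVec _ _ _
    _ = (x ᵥ* (Mᵀ * J6 * M)) ⬝ᵥ y := by
        rw [← vecMul_transpose, vecMul_vecMul, vecMul_vecMul, Matrix.mul_assoc]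
    _ = (x ᵥ* J6) ⬝ᵥ y := by rw [h]
    _ = x ⬝ᵥ J6 *ᵥ y := (dotProduct_mulVec _ _ _).symm
    _ = pair x y := (pair_eq_dot _ _).symm

def mkG (M N : Matrix (Fin 6) (Fin 6) ℤ) (h1 : M * N = 1) (h2 : N * M = 1) :
    (Fin (5+1) → ℤ) ≃ₗ[ℤ] (Fin (5+1) → ℤ) :=
  LinearEquiv.ofLinear (Matrix.toLin' M) (Matrix.toLin' N)
    (by rw [← Matrix.toLin'_mul, h1, Matrix.toLin'_one])
    (by rw [← Matrix.toLin'_mul, h2, Matrix.toLin'_one])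

lemma mkG_apply (M N : Matrix (Fin 6) (Fin 6) ℤ) (h1 h2) (x : Fin 6 → ℤ) :
    mkG M N h1 h2 x = M.mulVec x := by
  simp [mkG, Matrix.toLin'_apply]

lemma reach_aux (base v : Fin (5+1) → ℤ) (M N : Matrix (Fin 6) (Fin 6) ℤ)
    (h1 : M * N = 1) (h2 : N * M = 1) (h3 : Mᵀ * J6 * M = J6)
    (hK : M.mulVec (Kc 5) = Kc 5) (h4 : M.mulVec base = v) :
    ∃ g : (Fin (5+1) → ℤ) ≃ₗ[ℤ] (Fin (5+1) → ℤ),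
      (∀ x y, pair (g x) (g y) = pair x y) ∧ g (Kc 5) = Kc 5 ∧ g base = v :=
  ⟨mkG M N h1 h2,
   fun x y => by rw [mkG_apply, mkG_apply]; exact pair_preserve M h3 x y,
   by rw [mkG_apply]; exact hK,
   by rw [mkG_apply]; exact h4⟩

set_option maxHeartbeats 4000000 in
lemma conic_classify (Q : Fin (5+1) → ℤ) (h : Conic Q) :
    Q = ![1,-1,0,0,0,0] ∨
    Q = ![1,0,-1,0,0,0] ∨
    Q = ![1,0,0,-1,0,0] ∨
    Q = ![1,0,0,0,-1,0] ∨
    Q = ![1,0,0,0,0,-1] ∨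
    Q = ![2,-1,-1,-1,-1,0] ∨
    Q = ![2,-1,-1,-1,0,-1] ∨
    Q = ![2,-1,-1,0,-1,-1] ∨
    Q = ![2,-1,0,-1,-1,-1] ∨
    Q = ![2,0,-1,-1,-1,-1] := by
  obtain ⟨hnef, hQQ, hKQ⟩ := h
  rw [pair_expand] at hQQ hKQ
  have h1 := hnef ![0,1,0,0,0,0] ⟨by decide, by decide⟩
  have h2 := hnef ![0,0,1,0,0,0] ⟨by decide, by decide⟩
  have h3 := hnef ![0,0,0,1,0,0] ⟨by decide, by decide⟩
  have h4 := hnef ![0,0,0,0,1,0] ⟨by decide, by decide⟩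
  have h5 := hnef ![0,0,0,0,0,1] ⟨by decide, by decide⟩
  have h6 := hnef ![2,-1,-1,-1,-1,-1] ⟨by decide, by decide⟩
  rw [pair_expand] at h1 h2 h3 h4 h5 h6
  simp only [Matrix.cons_val] at h1 h2 h3 h4 h5 h6
  obtain ⟨a, b, c, d, e, f, hQ⟩ : ∃ a b c d e f, Q = ![a,b,c,d,e,f] :=
    ⟨Q 0, Q 1, Q 2, Q 3, Q 4, Q 5, by funext i; fin_cases i <;> rfl⟩
  subst hQ
  norm_num [Matrix.cons_val_zero, Matrix.cons_val_one, Matrix.head_cons, Kc,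
    show ((1:Fin 6)=0) = False from by decide, show ((2:Fin 6)=0) = False from by decide,
    show ((3:Fin 6)=0) = False from by decide, show ((4:Fin 6)=0) = False from by decide,
    show ((5:Fin 6)=0) = False from by decide,
    show (![a,b,c,d,e,f] : Fin 6 → ℤ) 0 = a from rfl,
    show (![a,b,c,d,e,f] : Fin 6 → ℤ) 1 = b from rfl,
    show (![a,b,c,d,e,f] : Fin 6 → ℤ) 2 = c from rfl,
    show (![a,b,c,d,e,f] : Fin 6 → ℤ) 3 = d from rfl,
    show (![a,b,c,d,e,f] : Fin 6 → ℤ) 4 = e from rfl,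
    show (![a,b,c,d,e,f] : Fin 6 → ℤ) 5 = f from rfl,
    show (![(0:ℤ),1,0,0,0,0] : Fin 6 → ℤ) 5 = 0 from rfl,
    show (![(0:ℤ),0,1,0,0,0] : Fin 6 → ℤ) 5 = 0 from rfl,
    show (![(0:ℤ),0,0,1,0,0] : Fin 6 → ℤ) 5 = 0 from rfl,
    show (![(0:ℤ),0,0,0,1,0] : Fin 6 → ℤ) 5 = 0 from rfl,
    show (![(0:ℤ),0,0,0,0,1] : Fin 6 → ℤ) 5 = 1 from rfl,
    show (![(2:ℤ),-1,-1,-1,-1,-1] : Fin 6 → ℤ) 5 = -1 from rfl] at hQQ hKQ h1 h2 h3 h4 h5 h6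
  have ha1 : 1 ≤ a := by omega
  have ha2 : a ≤ 2 := by omega
  have hsq : b*b + c*c + d*d + e*e + f*f ≤ 4 := by nlinarith [mul_nonneg (by linarith : (0:ℤ) ≤ 2 - a) (by linarith : (0:ℤ) ≤ a)]
  have hb : -2 ≤ b := by nlinarith [sq_nonneg (b+3), sq_nonneg c, sq_nonneg d, sq_nonneg e, sq_nonneg f]
  have hc : -2 ≤ c := by nlinarith [sq_nonneg (c+3), sq_nonneg b, sq_nonneg d, sq_nonneg e, sq_nonneg f]
  have hd : -2 ≤ d := by nlinarith [sq_nonneg (d+3), sq_nonneg c, sq_nonneg b, sq_nonneg e, sq_nonneg f]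
  have he : -2 ≤ e := by nlinarith [sq_nonneg (e+3), sq_nonneg c, sq_nonneg d, sq_nonneg b, sq_nonneg f]
  have hf : -2 ≤ f := by nlinarith [sq_nonneg (f+3), sq_nonneg c, sq_nonneg d, sq_nonneg e, sq_nonneg b]
  have hb0 : b ≤ 0 := by omega
  have hc0 : c ≤ 0 := by omega
  have hd0 : d ≤ 0 := by omega
  have he0 : e ≤ 0 := by omega
  have hf0 : f ≤ 0 := by omega
  clear h1 h2 h3 h4 h5 h6 hsq hnef
  interval_cases a <;> interval_cases b <;> interval_cases c <;> interval_cases d <;>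
    interval_cases e <;> interval_cases f <;>
    first
      | (exfalso; omega)
      | decide

set_option maxHeartbeats 4000000 in
lemma cubic_classify (Q : Fin (5+1) → ℤ) (h : TwistedCubic Q) :
    Q = ![1,0,0,0,0,0] ∨
    Q = ![2,-1,-1,-1,0,0] ∨
    Q = ![2,-1,-1,0,-1,0] ∨
    Q = ![2,-1,-1,0,0,-1] ∨
    Q = ![2,-1,0,-1,-1,0] ∨
    Q = ![2,-1,0,-1,0,-1] ∨
    Q = ![2,-1,0,0,-1,-1] ∨
    Q = ![2,0,-1,-1,-1,0] ∨
    Q = ![2,0,-1,-1,0,-1] ∨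
    Q = ![2,0,-1,0,-1,-1] ∨
    Q = ![2,0,0,-1,-1,-1] ∨
    Q = ![3,-2,-1,-1,-1,-1] ∨
    Q = ![3,-1,-2,-1,-1,-1] ∨
    Q = ![3,-1,-1,-2,-1,-1] ∨
    Q = ![3,-1,-1,-1,-2,-1] ∨
    Q = ![3,-1,-1,-1,-1,-2] := by
  obtain ⟨hnef, hQQ, hKQ⟩ := h
  rw [pair_expand] at hQQ hKQ
  have h1 := hnef ![0,1,0,0,0,0] ⟨by decide, by decide⟩
  have h2 := hnef ![0,0,1,0,0,0] ⟨by decide, by decide⟩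
  have h3 := hnef ![0,0,0,1,0,0] ⟨by decide, by decide⟩
  have h4 := hnef ![0,0,0,0,1,0] ⟨by decide, by decide⟩
  have h5 := hnef ![0,0,0,0,0,1] ⟨by decide, by decide⟩
  have h6 := hnef ![2,-1,-1,-1,-1,-1] ⟨by decide, by decide⟩
  rw [pair_expand] at h1 h2 h3 h4 h5 h6
  simp only [Matrix.cons_val] at h1 h2 h3 h4 h5 h6
  obtain ⟨a, b, c, d, e, f, hQ⟩ : ∃ a b c d e f, Q = ![a,b,c,d,e,f] :=
    ⟨Q 0, Q 1, Q 2, Q 3, Q 4, Q 5, by funext i; fin_cases i <;> rfl⟩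
  subst hQ
  norm_num [Matrix.cons_val_zero, Matrix.cons_val_one, Matrix.head_cons, Kc,
    show ((1:Fin 6)=0) = False from by decide, show ((2:Fin 6)=0) = False from by decide,
    show ((3:Fin 6)=0) = False from by decide, show ((4:Fin 6)=0) = False from by decide,
    show ((5:Fin 6)=0) = False from by decide,
    show (![a,b,c,d,e,f] : Fin 6 → ℤ) 0 = a from rfl,
    show (![a,b,c,d,e,f] : Fin 6 → ℤ) 1 = b from rfl,
    show (![a,b,c,d,e,f] : Fin 6 → ℤ) 2 = c from rfl,
    show (![a,b,c,d,e,f] : Fin 6 → ℤ) 3 = d from rfl,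
    show (![a,b,c,d,e,f] : Fin 6 → ℤ) 4 = e from rfl,
    show (![a,b,c,d,e,f] : Fin 6 → ℤ) 5 = f from rfl,
    show (![(0:ℤ),1,0,0,0,0] : Fin 6 → ℤ) 5 = 0 from rfl,
    show (![(0:ℤ),0,1,0,0,0] : Fin 6 → ℤ) 5 = 0 from rfl,
    show (![(0:ℤ),0,0,1,0,0] : Fin 6 → ℤ) 5 = 0 from rfl,
    show (![(0:ℤ),0,0,0,1,0] : Fin 6 → ℤ) 5 = 0 from rfl,
    show (![(0:ℤ),0,0,0,0,1] : Fin 6 → ℤ) 5 = 1 from rfl,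
    show (![(2:ℤ),-1,-1,-1,-1,-1] : Fin 6 → ℤ) 5 = -1 from rfl] at hQQ hKQ h1 h2 h3 h4 h5 h6
  have ha1 : 1 ≤ a := by omega
  have ha2 : a ≤ 3 := by omega
  have hsq : b*b + c*c + d*d + e*e + f*f ≤ 8 := by nlinarith [mul_nonneg (by linarith : (0:ℤ) ≤ 3 - a) (by linarith : (0:ℤ) ≤ a)]
  have hb : -2 ≤ b := by nlinarith [sq_nonneg (b+3), sq_nonneg c, sq_nonneg d, sq_nonneg e, sq_nonneg f]
  have hc : -2 ≤ c := by nlinarith [sq_nonneg (c+3), sq_nonneg b, sq_nonneg d, sq_nonneg e, sq_nonneg f]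
  have hd : -2 ≤ d := by nlinarith [sq_nonneg (d+3), sq_nonneg c, sq_nonneg b, sq_nonneg e, sq_nonneg f]
  have he : -2 ≤ e := by nlinarith [sq_nonneg (e+3), sq_nonneg c, sq_nonneg d, sq_nonneg b, sq_nonneg f]
  have hf : -2 ≤ f := by nlinarith [sq_nonneg (f+3), sq_nonneg c, sq_nonneg d, sq_nonneg e, sq_nonneg b]
  have hb0 : b ≤ 0 := by omega
  have hc0 : c ≤ 0 := by omega
  have hd0 : d ≤ 0 := by omega
  have he0 : e ≤ 0 := by omega
  have hf0 : f ≤ 0 := by omega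
  clear h1 h2 h3 h4 h5 h6 hsq hnef
  interval_cases a <;> interval_cases b <;> interval_cases c <;> interval_cases d <;>
    interval_cases e <;> interval_cases f <;>
    first
      | (exfalso; omega)
      | decide

lemma conic_reach (Q : Fin (5+1) → ℤ) (h : Conic Q) :
    ∃ g : (Fin (5+1) → ℤ) ≃ₗ[ℤ] (Fin (5+1) → ℤ),
      (∀ x y, pair (g x) (g y) = pair x y) ∧ g (Kc 5) = Kc 5 ∧ g ![1,-1,0,0,0,0] = Q := by
  rcases conic_classify Q h with h0|h1|h2|h3|h4|h5|h6|h7|h8|h9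
  · rw [h0]
    exact reach_aux _ _ !![1, 0, 0, 0, 0, 0; 0, 1, 0, 0, 0, 0; 0, 0, 1, 0, 0, 0; 0, 0, 0, 1, 0, 0; 0, 0, 0, 0, 1, 0; 0, 0, 0, 0, 0, 1] !![1, 0, 0, 0, 0, 0; 0, 1, 0, 0, 0, 0; 0, 0, 1, 0, 0, 0; 0, 0, 0, 1, 0, 0; 0, 0, 0, 0, 1, 0; 0, 0, 0, 0, 0, 1] (by decide) (by decide) (by decide) (by decide) (by decide)
  · rw [h1]
    exact reach_aux _ _ !![1, 0, 0, 0, 0, 0; 0, 0, 1, 0, 0, 0; 0, 1, 0, 0, 0, 0; 0, 0, 0, 1, 0, 0; 0, 0, 0, 0, 1, 0; 0, 0, 0, 0, 0, 1] !![1, 0, 0, 0, 0, 0; 0, 0, 1, 0, 0, 0; 0, 1, 0, 0, 0, 0; 0, 0, 0, 1, 0, 0; 0, 0, 0, 0, 1, 0; 0, 0, 0, 0, 0, 1] (by decide) (by decide) (by decide) (by decide) (by decide)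
  · rw [h2]
    exact reach_aux _ _ !![1, 0, 0, 0, 0, 0; 0, 0, 1, 0, 0, 0; 0, 0, 0, 1, 0, 0; 0, 1, 0, 0, 0, 0; 0, 0, 0, 0, 1, 0; 0, 0, 0, 0, 0, 1] !![1, 0, 0, 0, 0, 0; 0, 0, 0, 1, 0, 0; 0, 1, 0, 0, 0, 0; 0, 0, 1, 0, 0, 0; 0, 0, 0, 0, 1, 0; 0, 0, 0, 0, 0, 1] (by decide) (by decide) (by decide) (by decide) (by decide)
  · rw [h3]
    exact reach_aux _ _ !![1, 0, 0, 0, 0, 0; 0, 0, 1, 0, 0, 0; 0, 0, 0, 1, 0, 0; 0, 0, 0, 0, 1, 0; 0, 1, 0, 0, 0, 0; 0, 0, 0, 0, 0, 1] !![1, 0, 0, 0, 0, 0; 0, 0, 0, 0, 1, 0; 0, 1, 0, 0, 0, 0; 0, 0, 1, 0, 0, 0; 0, 0, 0, 1, 0, 0; 0, 0, 0, 0, 0, 1] (by decide) (by decide) (by decide) (by decide) (by decide)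
  · rw [h4]
    exact reach_aux _ _ !![1, 0, 0, 0, 0, 0; 0, 0, 1, 0, 0, 0; 0, 0, 0, 1, 0, 0; 0, 0, 0, 0, 1, 0; 0, 0, 0, 0, 0, 1; 0, 1, 0, 0, 0, 0] !![1, 0, 0, 0, 0, 0; 0, 0, 0, 0, 0, 1; 0, 1, 0, 0, 0, 0; 0, 0, 1, 0, 0, 0; 0, 0, 0, 1, 0, 0; 0, 0, 0, 0, 1, 0] (by decide) (by decide) (by decide) (by decide) (by decide)
  · rw [h5]
    exact reach_aux _ _ !![2, 0, 1, 1, 1, 0; -1, 0, 0, -1, -1, 0; -1, 0, -1, 0, -1, 0; -1, 0, -1, -1, 0, 0; 0, 1, 0, 0, 0, 0; 0, 0, 0, 0, 0, 1] !![2, 1, 1, 1, 0, 0; 0, 0, 0, 0, 1, 0; -1, 0, -1, -1, 0, 0; -1, -1, 0, -1, 0, 0; -1, -1, -1, 0, 0, 0; 0, 0, 0, 0, 0, 1] (by decide) (by decide) (by decide) (by decide) (by decide)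
  · rw [h6]
    exact reach_aux _ _ !![2, 0, 1, 1, 1, 0; -1, 0, 0, -1, -1, 0; -1, 0, -1, 0, -1, 0; -1, 0, -1, -1, 0, 0; 0, 0, 0, 0, 0, 1; 0, 1, 0, 0, 0, 0] !![2, 1, 1, 1, 0, 0; 0, 0, 0, 0, 0, 1; -1, 0, -1, -1, 0, 0; -1, -1, 0, -1, 0, 0; -1, -1, -1, 0, 0, 0; 0, 0, 0, 0, 1, 0] (by decide) (by decide) (by decide) (by decide) (by decide)
  · rw [h7]
    exact reach_aux _ _ !![2, 0, 1, 1, 1, 0; -1, 0, 0, -1, -1, 0; -1, 0, -1, 0, -1, 0; 0, 0, 0, 0, 0, 1; -1, 0, -1, -1, 0, 0; 0, 1, 0, 0, 0, 0] !![2, 1, 1, 0, 1, 0; 0, 0, 0, 0, 0, 1; -1, 0, -1, 0, -1, 0; -1, -1, 0, 0, -1, 0; -1, -1, -1, 0, 0, 0; 0, 0, 0, 1, 0, 0] (by decide) (by decide) (by decide) (by decide) (by decide)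
  · rw [h8]
    exact reach_aux _ _ !![2, 0, 1, 1, 1, 0; -1, 0, 0, -1, -1, 0; 0, 0, 0, 0, 0, 1; -1, 0, -1, 0, -1, 0; -1, 0, -1, -1, 0, 0; 0, 1, 0, 0, 0, 0] !![2, 1, 0, 1, 1, 0; 0, 0, 0, 0, 0, 1; -1, 0, 0, -1, -1, 0; -1, -1, 0, 0, -1, 0; -1, -1, 0, -1, 0, 0; 0, 0, 1, 0, 0, 0] (by decide) (by decide) (by decide) (by decide) (by decide)
  · rw [h9]
    exact reach_aux _ _ !![2, 0, 1, 1, 1, 0; 0, 0, 0, 0, 0, 1; -1, 0, 0, -1, -1, 0; -1, 0, -1, 0, -1, 0; -1, 0, -1, -1, 0, 0; 0, 1, 0, 0, 0, 0] !![2, 0, 1, 1, 1, 0; 0, 0, 0, 0, 0, 1; -1, 0, 0, -1, -1, 0; -1, 0, -1, 0, -1, 0; -1, 0, -1, -1, 0, 0; 0, 1, 0, 0, 0, 0] (by decide) (by decide) (by decide) (by decide) (by decide)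

lemma cubic_reach (Q : Fin (5+1) → ℤ) (h : TwistedCubic Q) :
    ∃ g : (Fin (5+1) → ℤ) ≃ₗ[ℤ] (Fin (5+1) → ℤ),
      (∀ x y, pair (g x) (g y) = pair x y) ∧ g (Kc 5) = Kc 5 ∧ g ![1,0,0,0,0,0] = Q := by
  rcases cubic_classify Q h with h0|h1|h2|h3|h4|h5|h6|h7|h8|h9|h10|h11|h12|h13|h14|h15
  · rw [h0]
    exact reach_aux _ _ !![1, 0, 0, 0, 0, 0; 0, 1, 0, 0, 0, 0; 0, 0, 1, 0, 0, 0; 0, 0, 0, 1, 0, 0; 0, 0, 0, 0, 1, 0; 0, 0, 0, 0, 0, 1] !![1, 0, 0, 0, 0, 0; 0, 1, 0, 0, 0, 0; 0, 0, 1, 0, 0, 0; 0, 0, 0, 1, 0, 0; 0, 0, 0, 0, 1, 0; 0, 0, 0, 0, 0, 1] (by decide) (by decide) (by decide) (by decide) (by decide)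
  · rw [h1]
    exact reach_aux _ _ !![2, 1, 1, 1, 0, 0; -1, 0, -1, -1, 0, 0; -1, -1, 0, -1, 0, 0; -1, -1, -1, 0, 0, 0; 0, 0, 0, 0, 1, 0; 0, 0, 0, 0, 0, 1] !![2, 1, 1, 1, 0, 0; -1, 0, -1, -1, 0, 0; -1, -1, 0, -1, 0, 0; -1, -1, -1, 0, 0, 0; 0, 0, 0, 0, 1, 0; 0, 0, 0, 0, 0, 1] (by decide) (by decide) (by decide) (by decide) (by decide)
  · rw [h2]
    exact reach_aux _ _ !![2, 1, 1, 1, 0, 0; -1, 0, -1, -1, 0, 0; -1, -1, 0, -1, 0, 0; 0, 0, 0, 0, 1, 0; -1, -1, -1, 0, 0, 0; 0, 0, 0, 0, 0, 1] !![2, 1, 1, 0, 1, 0; -1, 0, -1, 0, -1, 0; -1, -1, 0, 0, -1, 0; -1, -1, -1, 0, 0, 0; 0, 0, 0, 1, 0, 0; 0, 0, 0, 0, 0, 1] (by decide) (by decide) (by decide) (by decide) (by decide)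
  · rw [h3]
    exact reach_aux _ _ !![2, 1, 1, 1, 0, 0; -1, 0, -1, -1, 0, 0; -1, -1, 0, -1, 0, 0; 0, 0, 0, 0, 1, 0; 0, 0, 0, 0, 0, 1; -1, -1, -1, 0, 0, 0] !![2, 1, 1, 0, 0, 1; -1, 0, -1, 0, 0, -1; -1, -1, 0, 0, 0, -1; -1, -1, -1, 0, 0, 0; 0, 0, 0, 1, 0, 0; 0, 0, 0, 0, 1, 0] (by decide) (by decide) (by decide) (by decide) (by decide)
  · rw [h4]
    exact reach_aux _ _ !![2, 1, 1, 1, 0, 0; -1, 0, -1, -1, 0, 0; 0, 0, 0, 0, 1, 0; -1, -1, 0, -1, 0, 0; -1, -1, -1, 0, 0, 0; 0, 0, 0, 0, 0, 1] !![2, 1, 0, 1, 1, 0; -1, 0, 0, -1, -1, 0; -1, -1, 0, 0, -1, 0; -1, -1, 0, -1, 0, 0; 0, 0, 1, 0, 0, 0; 0, 0, 0, 0, 0, 1] (by decide) (by decide) (by decide) (by decide) (by decide)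
  · rw [h5]
    exact reach_aux _ _ !![2, 1, 1, 1, 0, 0; -1, 0, -1, -1, 0, 0; 0, 0, 0, 0, 1, 0; -1, -1, 0, -1, 0, 0; 0, 0, 0, 0, 0, 1; -1, -1, -1, 0, 0, 0] !![2, 1, 0, 1, 0, 1; -1, 0, 0, -1, 0, -1; -1, -1, 0, 0, 0, -1; -1, -1, 0, -1, 0, 0; 0, 0, 1, 0, 0, 0; 0, 0, 0, 0, 1, 0] (by decide) (by decide) (by decide) (by decide) (by decide)
  · rw [h6]
    exact reach_aux _ _ !![2, 1, 1, 1, 0, 0; -1, 0, -1, -1, 0, 0; 0, 0, 0, 0, 1, 0; 0, 0, 0, 0, 0, 1; -1, -1, 0, -1, 0, 0; -1, -1, -1, 0, 0, 0] !![2, 1, 0, 0, 1, 1; -1, 0, 0, 0, -1, -1; -1, -1, 0, 0, 0, -1; -1, -1, 0, 0, -1, 0; 0, 0, 1, 0, 0, 0; 0, 0, 0, 1, 0, 0] (by decide) (by decide) (by decide) (by decide) (by decide)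
  · rw [h7]
    exact reach_aux _ _ !![2, 1, 1, 1, 0, 0; 0, 0, 0, 0, 1, 0; -1, 0, -1, -1, 0, 0; -1, -1, 0, -1, 0, 0; -1, -1, -1, 0, 0, 0; 0, 0, 0, 0, 0, 1] !![2, 0, 1, 1, 1, 0; -1, 0, 0, -1, -1, 0; -1, 0, -1, 0, -1, 0; -1, 0, -1, -1, 0, 0; 0, 1, 0, 0, 0, 0; 0, 0, 0, 0, 0, 1] (by decide) (by decide) (by decide) (by decide) (by decide)
  · rw [h8]
    exact reach_aux _ _ !![2, 1, 1, 1, 0, 0; 0, 0, 0, 0, 1, 0; -1, 0, -1, -1, 0, 0; -1, -1, 0, -1, 0, 0; 0, 0, 0, 0, 0, 1; -1, -1, -1, 0, 0, 0] !![2, 0, 1, 1, 0, 1; -1, 0, 0, -1, 0, -1; -1, 0, -1, 0, 0, -1; -1, 0, -1, -1, 0, 0; 0, 1, 0, 0, 0, 0; 0, 0, 0, 0, 1, 0] (by decide) (by decide) (by decide) (by decide) (by decide)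
  · rw [h9]
    exact reach_aux _ _ !![2, 1, 1, 1, 0, 0; 0, 0, 0, 0, 1, 0; -1, 0, -1, -1, 0, 0; 0, 0, 0, 0, 0, 1; -1, -1, 0, -1, 0, 0; -1, -1, -1, 0, 0, 0] !![2, 0, 1, 0, 1, 1; -1, 0, 0, 0, -1, -1; -1, 0, -1, 0, 0, -1; -1, 0, -1, 0, -1, 0; 0, 1, 0, 0, 0, 0; 0, 0, 0, 1, 0, 0] (by decide) (by decide) (by decide) (by decide) (by decide)
  · rw [h10]
    exact reach_aux _ _ !![2, 1, 1, 1, 0, 0; 0, 0, 0, 0, 1, 0; 0, 0, 0, 0, 0, 1; -1, 0, -1, -1, 0, 0; -1, -1, 0, -1, 0, 0; -1, -1, -1, 0, 0, 0] !![2, 0, 0, 1, 1, 1; -1, 0, 0, 0, -1, -1; -1, 0, 0, -1, 0, -1; -1, 0, 0, -1, -1, 0; 0, 1, 0, 0, 0, 0; 0, 0, 1, 0, 0, 0] (by decide) (by decide) (by decide) (by decide) (by decide)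
  · rw [h11]
    exact reach_aux _ _ !![3, 2, 1, 1, 1, 1; -2, -1, -1, -1, -1, -1; -1, -1, 0, 0, 0, -1; -1, -1, 0, 0, -1, 0; -1, -1, 0, -1, 0, 0; -1, -1, -1, 0, 0, 0] !![3, 2, 1, 1, 1, 1; -2, -1, -1, -1, -1, -1; -1, -1, 0, 0, 0, -1; -1, -1, 0, 0, -1, 0; -1, -1, 0, -1, 0, 0; -1, -1, -1, 0, 0, 0] (by decide) (by decide) (by decide) (by decide) (by decide)
  · rw [h12]
    exact reach_aux _ _ !![3, 2, 1, 1, 1, 1; -1, -1, 0, 0, 0, -1; -2, -1, -1, -1, -1, -1; -1, -1, 0, 0, -1, 0; -1, -1, 0, -1, 0, 0; -1, -1, -1, 0, 0, 0] !![3, 1, 2, 1, 1, 1; -2, -1, -1, -1, -1, -1; -1, 0, -1, 0, 0, -1; -1, 0, -1, 0, -1, 0; -1, 0, -1, -1, 0, 0; -1, -1, -1, 0, 0, 0] (by decide) (by decide) (by decide) (by decide) (by decide)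
  · rw [h13]
    exact reach_aux _ _ !![3, 2, 1, 1, 1, 1; -1, -1, 0, 0, 0, -1; -1, -1, 0, 0, -1, 0; -2, -1, -1, -1, -1, -1; -1, -1, 0, -1, 0, 0; -1, -1, -1, 0, 0, 0] !![3, 1, 1, 2, 1, 1; -2, -1, -1, -1, -1, -1; -1, 0, 0, -1, 0, -1; -1, 0, 0, -1, -1, 0; -1, 0, -1, -1, 0, 0; -1, -1, 0, -1, 0, 0] (by decide) (by decide) (by decide) (by decide) (by decide)
  · rw [h14]
    exact reach_aux _ _ !![3, 2, 1, 1, 1, 1; -1, -1, 0, 0, 0, -1; -1, -1, 0, 0, -1, 0; -1, -1, 0, -1, 0, 0; -2, -1, -1, -1, -1, -1; -1, -1, -1, 0, 0, 0] !![3, 1, 1, 1, 2, 1; -2, -1, -1, -1, -1, -1; -1, 0, 0, 0, -1, -1; -1, 0, 0, -1, -1, 0; -1, 0, -1, 0, -1, 0; -1, -1, 0, 0, -1, 0] (by decide) (by decide) (by decide) (by decide) (by decide)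
  · rw [h15]
    exact reach_aux _ _ !![3, 2, 1, 1, 1, 1; -1, -1, 0, 0, 0, -1; -1, -1, 0, 0, -1, 0; -1, -1, 0, -1, 0, 0; -1, -1, -1, 0, 0, 0; -2, -1, -1, -1, -1, -1] !![3, 1, 1, 1, 1, 2; -2, -1, -1, -1, -1, -1; -1, 0, 0, 0, -1, -1; -1, 0, 0, -1, 0, -1; -1, 0, -1, 0, 0, -1; -1, -1, 0, 0, 0, -1] (by decide) (by decide) (by decide) (by decide) (by decide)

lemma combine {P : (Fin (5+1) → ℤ) → Prop} (base : Fin (5+1) → ℤ)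
    (reach : ∀ Q, P Q → ∃ g : (Fin (5+1) → ℤ) ≃ₗ[ℤ] (Fin (5+1) → ℤ),
      (∀ x y, pair (g x) (g y) = pair x y) ∧ g (Kc 5) = Kc 5 ∧ g base = Q)
    (Q Q' : Fin (5+1) → ℤ) (hQ : P Q) (hQ' : P Q') :
    ∃ g : (Fin (5+1) → ℤ) ≃ₗ[ℤ] (Fin (5+1) → ℤ),
      (∀ x y, pair (g x) (g y) = pair x y) ∧ g (Kc 5) = Kc 5 ∧ g Q = Q' := by
  obtain ⟨g1, hp1, hK1, hb1⟩ := reach Q hQ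
  obtain ⟨g2, hp2, hK2, hb2⟩ := reach Q' hQ'
  refine ⟨g1.symm.trans g2, ?_, ?_, ?_⟩
  · intro x y
    have h := hp1 (g1.symm x) (g1.symm y)
    rw [g1.apply_symm_apply, g1.apply_symm_apply] at h
    simp only [LinearEquiv.trans_apply]
    rw [hp2, h]
  · have hs : g1.symm (Kc 5) = Kc 5 := by
      have h := congrArg g1.symm hK1
      rw [g1.symm_apply_apply] at h
      exact h.symm
    simp only [LinearEquiv.trans_apply, hs, hK2]
  · have hs : g1.symm Q = base := by
      have h := congrArg g1.symm hb1
      rw [g1.symm_apply_apply] at h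
      exact h.symm
    simp only [LinearEquiv.trans_apply, hs, hb2]

/-- The group of ℤ-linear automorphisms of `Λ₅` preserving the pairing and
fixing `K₅` acts transitively on the conics, and also on the twisted cubics. -/
theorem weyl_transitive_on_conics_and_cubics :
    (∀ Q Q' : Fin (5 + 1) → ℤ, Conic Q → Conic Q' →
        ∃ g : (Fin (5 + 1) → ℤ) ≃ₗ[ℤ] (Fin (5 + 1) → ℤ),
          (∀ x y, pair (g x) (g y) = pair x y) ∧ g (Kc 5) = Kc 5 ∧ g Q = Q') ∧
    (∀ C C' : Fin (5 + 1) → ℤ, TwistedCubic C → TwistedCubic C' →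
        ∃ g : (Fin (5 + 1) → ℤ) ≃ₗ[ℤ] (Fin (5 + 1) → ℤ),
          (∀ x y, pair (g x) (g y) = pair x y) ∧ g (Kc 5) = Kc 5 ∧ g C = C') :=
  ⟨combine ![1,-1,0,0,0,0] conic_reach, combine ![1,0,0,0,0,0] cubic_reach⟩
end
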